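/- (Failure of the Kochen–Specker theorem in dimension 2) There exists a 0-deterministic QIVPM on ℂ²: there is a function v : Matrix (Fin 2) (Fin 2) ℂ → ℝ taking only the values 0 and 1 on projectors such that the pair L = v, R = v is a QIVPM on ℂ². -/
import Mathlib


open Matrix
open scoped ComplexOrder

/-- A projector on `ℂ^d`: an idempotent, self-adjoint matrix. -/
def IsProjector {d : ℕ} (P : Matrix (Fin d) (Fin d) ℂ) : Prop :=
  P * P = P ∧ Pᴴ = P

/-- A quantum interval-valued probability measure (QIVPM) on `ℂ^d`,
given by the pair of interval-endpoint functions `L ≤ R`. -/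
def IsQIVPM {d : ℕ} (L R : Matrix (Fin d) (Fin d) ℂ → ℝ) : Prop :=
  (∀ P, IsProjector P → 0 ≤ L P ∧ L P ≤ R P ∧ R P ≤ 1) ∧
  (L 0 = 0 ∧ R 0 = 0) ∧
  (L 1 = 1 ∧ R 1 = 1) ∧
  (∀ P, IsProjector P → L (1 - P) = 1 - R P ∧ R (1 - P) = 1 - L P) ∧
  (∀ P₀ P₁, IsProjector P₀ → IsProjector P₁ → P₀ * P₁ = P₁ * P₀ →
    L P₀ + L P₁ ≤ L (P₀ + P₁ - P₀ * P₁) + L (P₀ * P₁) ∧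
    R (P₀ + P₁ - P₀ * P₁) + R (P₀ * P₁) ≤ R P₀ + R P₁)

/-- A QIVPM is `δ`-deterministic if every projector's interval lies in `[0,δ]` or `[1-δ,1]`. -/
def IsDeltaDet {d : ℕ} (δ : ℝ) (L R : Matrix (Fin d) (Fin d) ℂ → ℝ) : Prop :=
  ∀ P, IsProjector P → R P ≤ δ ∨ 1 - δ ≤ L P

/-- A QIVPM is `0`-deterministic if every projector is assigned `[0,0]` or `[1,1]`. -/
def IsZeroDet {d : ℕ} (L R : Matrix (Fin d) (Fin d) ℂ → ℝ) : Prop :=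
  ∀ P, IsProjector P → (L P = 0 ∧ R P = 0) ∨ (L P = 1 ∧ R P = 1)

/-- A state (density matrix) on `ℂ^d`. -/
def IsState {d : ℕ} (ρ : Matrix (Fin d) (Fin d) ℂ) : Prop :=
  ρ.PosSemidef ∧ ρ.trace = 1

noncomputable def s1 (c : ℝ) : ℝ := if 0 < c then 1 else if c < 0 then -1 else 0
noncomputable def s2 (b c : ℝ) : ℝ := if 0 < b then 1 else if b < 0 then -1 else s1 c
noncomputable def s3 (a b c : ℝ) : ℝ := if 0 < a then 1 else if a < 0 then -1 else s2 b c

lemma s1_neg (c : ℝ) : s1 (-c) = - s1 c := by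
  rcases lt_trichotomy c 0 with h|h|h
  · rw [s1, s1, if_pos (by linarith), if_neg (asymm h), if_pos h]; norm_num
  · subst h; norm_num [s1]
  · rw [s1, s1, if_neg (by simp; linarith), if_pos (by linarith), if_pos h]
lemma s2_neg (b c : ℝ) : s2 (-b) (-c) = - s2 b c := by
  rcases lt_trichotomy b 0 with h|h|h
  · rw [s2, s2, if_pos (by linarith), if_neg (asymm h), if_pos h]; norm_num
  · subst h; simpa [s2] using s1_neg c
  · rw [s2, s2, if_neg (by simp; linarith), if_pos (by linarith), if_pos h]
lemma s3_neg (a b c : ℝ) : s3 (-a) (-b) (-c) = - s3 a b c := by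
  rcases lt_trichotomy a 0 with h|h|h
  · rw [s3, s3, if_pos (by linarith), if_neg (asymm h), if_pos h]; norm_num
  · subst h; simpa [s3] using s2_neg b c
  · rw [s3, s3, if_neg (by simp; linarith), if_pos (by linarith), if_pos h]

lemma s3_pm {a b c : ℝ} (h : ¬(a = 0 ∧ b = 0 ∧ c = 0)) :
    s3 a b c = 1 ∨ s3 a b c = -1 := by
  unfold s3 s2 s1
  split_ifs <;> first
    | (left; rfl)
    | (right; rfl)
    | (exfalso; exact h ⟨by linarith, by linarith, by linarith⟩)

noncomputable def vv (P : Matrix (Fin 2) (Fin 2) ℂ) : ℝ :=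
  (P.trace.re + s3 ((P 0 0).re - (P 1 1).re) (P 0 1).re (P 0 1).im) / 2

lemma proj_trichotomy {P : Matrix (Fin 2) (Fin 2) ℂ} (hP : IsProjector P) :
    P = 0 ∨ P = 1 ∨ (P.trace = 1 ∧
      ¬(((P 0 0).re - (P 1 1).re = 0) ∧ (P 0 1).re = 0 ∧ (P 0 1).im = 0)) := by
  obtain ⟨hmul, hherm⟩ := hP
  have e00 := congrFun (congrFun hmul 0) 0
  have e01 := congrFun (congrFun hmul 0) 1
  have e11 := congrFun (congrFun hmul 1) 1
  have ha := congrFun (congrFun hherm 0) 0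
  have hd := congrFun (congrFun hherm 1) 1
  have hcb := congrFun (congrFun hherm 0) 1
  simp [Matrix.mul_apply, Fin.sum_univ_two, Matrix.conjTranspose_apply] at e00 e01 e11 ha hd hcb
  by_cases htr : P 0 0 + P 1 1 = 1
  · right; right
    refine ⟨by rw [Matrix.trace_fin_two]; exact htr, ?_⟩
    rintro ⟨h1, h2, h3⟩
    have hb : P 0 1 = 0 := Complex.ext h2 h3
    have haim : (P 0 0).im = 0 := by
      have := congrArg Complex.im ha
      simp [Complex.conj_im] at this; linarith
    have hdim : (P 1 1).im = 0 := by
      have := congrArg Complex.im hd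
      simp [Complex.conj_im] at this; linarith
    have had : P 0 0 = P 1 1 := Complex.ext (by linarith) (by rw [haim, hdim])
    have hx : P 0 0 = 1/2 := by linear_combination htr/2 + had/2
    rw [hb] at e00
    rw [hx] at e00
    norm_num at e00
  · have hb : P 0 1 = 0 := by
      rcases mul_eq_zero.mp (show P 0 1 * (P 0 0 + P 1 1 - 1) = 0 by linear_combination e01) with h|h
      · exact h
      · exact absurd (by linear_combination h) htr
    have hc : P 1 0 = 0 := by
      have h2 : (starRingEnd ℂ) (P 1 0) = 0 := by rw [hcb, hb]
      simpa using h2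
    rw [hb, hc] at e00 e11
    simp at e00 e11
    have ha2 : P 0 0 = 0 ∨ P 0 0 = 1 := by
      rcases mul_eq_zero.mp (show P 0 0 * (P 0 0 - 1) = 0 by linear_combination e00) with h|h
      · exact Or.inl h
      · exact Or.inr (by linear_combination h)
    have hd2 : P 1 1 = 0 ∨ P 1 1 = 1 := by
      rcases mul_eq_zero.mp (show P 1 1 * (P 1 1 - 1) = 0 by linear_combination e11) with h|h
      · exact Or.inl h
      · exact Or.inr (by linear_combination h)
    rcases ha2 with h0|h0 <;> rcases hd2 with h1|h1
    · left; ext i j; fin_cases i <;> fin_cases j <;> simp [h0, h1, hb, hc]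
    · exact absurd (by rw [h0, h1]; ring) htr
    · exact absurd (by rw [h0, h1]; ring) htr
    · right; left; ext i j; fin_cases i <;> fin_cases j <;>
        simp [Matrix.one_apply, h0, h1, hb, hc]

lemma vv_zero : vv 0 = 0 := by simp [vv, s3, s2, s1, Matrix.trace]

lemma vv_one : vv 1 = 1 := by
  simp [vv, s3, s2, s1, Matrix.trace_fin_two, Matrix.one_apply]

lemma vv_pm {P : Matrix (Fin 2) (Fin 2) ℂ} (hP : IsProjector P) :
    vv P = 0 ∨ vv P = 1 := by
  rcases proj_trichotomy hP with h|h|⟨htr, hne⟩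
  · left; rw [h, vv_zero]
  · right; rw [h, vv_one]
  · have htre : P.trace.re = 1 := by rw [htr]; simp
    rcases s3_pm hne with h|h
    · right; unfold vv; rw [htre, h]; norm_num
    · left; unfold vv; rw [htre, h]; norm_num

lemma vv_compl {P : Matrix (Fin 2) (Fin 2) ℂ} (hP : IsProjector P) :
    vv (1 - P) = 1 - vv P := by
  rcases proj_trichotomy hP with h|h|⟨htr, _⟩
  · rw [h]; simp [vv_zero, vv_one]
  · rw [h]; simp [vv_zero, vv_one]
  · have htre : P.trace.re = 1 := by rw [htr]; simp
    have h1 : ((1 - P).trace).re = 1 := by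
      rw [Matrix.trace_sub, Matrix.trace_one, htr]; norm_num
    have e00 : ((1 - P) 0 0).re = 1 - (P 0 0).re := by
      simp [Matrix.sub_apply, Matrix.one_apply]
    have e11 : ((1 - P) 1 1).re = 1 - (P 1 1).re := by
      simp [Matrix.sub_apply, Matrix.one_apply]
    have e01r : ((1 - P) 0 1).re = -(P 0 1).re := by
      simp [Matrix.sub_apply, Matrix.one_apply]
    have e01i : ((1 - P) 0 1).im = -(P 0 1).im := by
      simp [Matrix.sub_apply, Matrix.one_apply]
    unfold vv
    rw [h1, htre, e00, e11, e01r, e01i]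
    have harg : (1 - (P 0 0).re) - (1 - (P 1 1).re) = -((P 0 0).re - (P 1 1).re) := by ring
    rw [harg, s3_neg]
    ring

lemma vv_convex {P₀ P₁ : Matrix (Fin 2) (Fin 2) ℂ}
    (h0 : IsProjector P₀) (h1 : IsProjector P₁) (comm : P₀ * P₁ = P₁ * P₀) :
    vv (P₀ + P₁ - P₀ * P₁) + vv (P₀ * P₁) = vv P₀ + vv P₁ := by
  by_cases c00 : P₀ = 0
  · subst c00; simp [vv_zero]
  by_cases c01 : P₀ = 1
  · subst c01; rw [one_mul, add_sub_cancel_right]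
  by_cases c10 : P₁ = 0
  · subst c10; simp [vv_zero]
  by_cases c11 : P₁ = 1
  · subst c11; rw [mul_one, add_sub_cancel_left]; ring
  have htr0 : P₀.trace = 1 := by
    rcases proj_trichotomy h0 with h|h|⟨h,_⟩
    · exact absurd h c00
    · exact absurd h c01
    · exact h
  have htr1 : P₁.trace = 1 := by
    rcases proj_trichotomy h1 with h|h|⟨h,_⟩
    · exact absurd h c10
    · exact absurd h c11
    · exact h
  have hQQ : (P₀ * P₁) * (P₀ * P₁) = P₀ * P₁ := by
    rw [mul_assoc, ← mul_assoc P₁ P₀ P₁, ← comm, mul_assoc, h1.1, ← mul_assoc, h0.1]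
  have hQH : (P₀ * P₁)ᴴ = P₀ * P₁ := by
    rw [Matrix.conjTranspose_mul, h0.2, h1.2, ← comm]
  have hQproj : IsProjector (P₀ * P₁) := ⟨hQQ, hQH⟩
  rcases proj_trichotomy hQproj with hQ|hQ|⟨hQtr, _⟩
  · -- Q = 0, so P₀ + P₁ is a projector, which must be 1
    have hSproj : IsProjector (P₀ + P₁) := by
      constructor
      · rw [add_mul, mul_add, mul_add, h0.1, h1.1, hQ, ← comm, hQ]
        abel
      · rw [Matrix.conjTranspose_add, h0.2, h1.2]
    rcases proj_trichotomy hSproj with hS|hS|⟨hStr, _⟩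
    · exfalso
      have := congrArg Matrix.trace hS
      rw [Matrix.trace_add, htr0, htr1, Matrix.trace_zero] at this
      norm_num at this
    · have hP1 : P₁ = 1 - P₀ := by rw [← hS]; abel
      rw [hQ, sub_zero, hS, vv_one, vv_zero, hP1, vv_compl h0]
      ring
    · exfalso
      rw [Matrix.trace_add, htr0, htr1] at hStr
      norm_num at hStr
  · -- Q = 1 impossible
    exfalso
    apply c01
    calc P₀ = P₀ * (P₀ * P₁) := by rw [hQ, mul_one]
    _ = (P₀ * P₀) * P₁ := by rw [mul_assoc]
    _ = P₀ * P₁ := by rw [h0.1]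
    _ = 1 := hQ
  · -- Q has trace 1, so P₀ = Q = P₁
    have hP0Q : P₀ * (P₀ * P₁) = P₀ * P₁ := by rw [← mul_assoc, h0.1]
    have hQP0 : (P₀ * P₁) * P₀ = P₀ * P₁ := by
      rw [mul_assoc, ← comm, ← mul_assoc, h0.1]
    have hQP1 : (P₀ * P₁) * P₁ = P₀ * P₁ := by rw [mul_assoc, h1.1]
    have hP1Q : P₁ * (P₀ * P₁) = P₀ * P₁ := by
      rw [← mul_assoc, ← comm, mul_assoc, h1.1]
    have hD0 : IsProjector (P₀ - P₀ * P₁) := by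
      constructor
      · rw [sub_mul, mul_sub, mul_sub, h0.1, hP0Q, hQP0, hQQ]; abel
      · rw [Matrix.conjTranspose_sub, h0.2, hQH]
    have hD1 : IsProjector (P₁ - P₀ * P₁) := by
      constructor
      · rw [sub_mul, mul_sub, mul_sub, h1.1, hP1Q, hQP1, hQQ]; abel
      · rw [Matrix.conjTranspose_sub, h1.2, hQH]
    have hE0 : P₀ = P₀ * P₁ := by
      rcases proj_trichotomy hD0 with h|h|⟨h,_⟩
      · exact sub_eq_zero.mp h
      · exfalso
        have := congrArg Matrix.trace h
        rw [Matrix.trace_sub, htr0, hQtr, Matrix.trace_one] at this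
        norm_num at this
      · exfalso
        rw [Matrix.trace_sub, htr0, hQtr] at h
        norm_num at h
    have hE1 : P₁ = P₀ * P₁ := by
      rcases proj_trichotomy hD1 with h|h|⟨h,_⟩
      · exact sub_eq_zero.mp h
      · exfalso
        have := congrArg Matrix.trace h
        rw [Matrix.trace_sub, htr1, hQtr, Matrix.trace_one] at this
        norm_num at this
      · exfalso
        rw [Matrix.trace_sub, htr1, hQtr] at h
        norm_num at h
    have hP01 : P₁ = P₀ := hE1.trans hE0.symm
    rw [hP01, h0.1, show P₀ + P₀ - P₀ = P₀ by abel]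


/-- Failure of the Kochen–Specker theorem in dimension 2: there exists a
0-deterministic QIVPM on `ℂ²`. -/
theorem zeroDeterministic_QIVPM_exists_dim2 :
    ∃ v : Matrix (Fin 2) (Fin 2) ℂ → ℝ,
      (∀ P, IsProjector P → v P = 0 ∨ v P = 1) ∧ IsQIVPM v v := by
  refine ⟨vv, fun P hP => vv_pm hP, ?_, ⟨vv_zero, vv_zero⟩, ⟨vv_one, vv_one⟩, ?_, ?_⟩
  · intro P hP
    rcases vv_pm hP with h|h <;> rw [h] <;> norm_num
  · intro P hP
    exact ⟨by rw [vv_compl hP], by rw [vv_compl hP]⟩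
  · intro P₀ P₁ h0 h1 comm
    have h := vv_convex h0 h1 comm
    exact ⟨le_of_eq h.symm, le_of_eq h⟩
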